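/- At an optimal solution of the joint assortment and pricing problem under the Threshold Luce model, prices are nonincreasing in the product index: p*_i ≥ p*_{i+1} for all offered products (indexed by decreasing intrinsic utility). Moreover, if two offered products have equal intrinsic utilities, then they have equal optimal prices. -/

import Mathlib

private lemma jensen_log_aux {x y a b : ℝ} (hx : 0 < x) (hy : 0 < y) (hxy : x ≠ y)
    (ha : 0 < a) (hb : 0 < b) (hab : a + b = 1) :
    a * Real.log x + b * Real.log y < Real.log (a * x + b * y) := by
  have h := strictConcaveOn_log_Ioi.2 (Set.mem_Ioi.mpr hx) (Set.mem_Ioi.mpr hy) hxy ha hb hab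
  simpa [smul_eq_mul] using h

/-- At an optimal solution of the joint assortment and pricing problem under the
Threshold Luce model, prices are nonincreasing in the product index (products indexed
by decreasing intrinsic utility), and offered products of equal intrinsic utility get
equal prices. -/
theorem optimal_prices_nonincreasing {n : ℕ}
    (u : Fin n → ℝ) (a0 t : ℝ) (ha0 : 0 < a0) (ht : 0 < t)
    (hsort : ∀ i j : Fin n, i ≤ j → u j ≤ u i) :
    let R : Finset (Fin n) → (Fin n → ℝ) → ℝ := fun A q =>
      (∑ k ∈ A, q k * Real.exp (u k - q k)) /
        ((∑ k ∈ A, Real.exp (u k - q k)) + a0)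
    let valid : Finset (Fin n) → (Fin n → ℝ) → Prop := fun A q =>
      ∀ j ∈ A, ∀ i ∈ A, Real.exp (u i - q i) ≤ (1 + t) * Real.exp (u j - q j)
    ∀ (Sstar : Finset (Fin n)) (pstar : Fin n → ℝ), valid Sstar pstar →
      (∀ S q, valid S q → R S q ≤ R Sstar pstar) →
      (∀ i ∈ Sstar, ∀ j ∈ Sstar, i ≤ j → pstar j ≤ pstar i) ∧
      (∀ i ∈ Sstar, ∀ j ∈ Sstar, u i = u j → pstar i = pstar j) := by
  intro R valid Sstar pstar hvalid hopt
  simp only [R, valid] at hvalid hopt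
  have key : ∀ i ∈ Sstar, ∀ j ∈ Sstar, u j ≤ u i → pstar i < pstar j → False := by
    intro i hi j hj huji hpij
    have hij : i ≠ j := by rintro rfl; exact lt_irrefl _ hpij
    set vi := Real.exp (u i - pstar i) with hvi_def
    set vj := Real.exp (u j - pstar j) with hvj_def
    set wi := Real.exp (u i) with hwi_def
    set wj := Real.exp (u j) with hwj_def
    have hvi : 0 < vi := Real.exp_pos _
    have hvj : 0 < vj := Real.exp_pos _
    have hwi : 0 < wi := Real.exp_pos _
    have hwj : 0 < wj := Real.exp_pos _
    have hc : 0 < vi + vj := by linarith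
    have hw : 0 < wi + wj := by linarith
    set q0 := Real.log ((wi + wj) / (vi + vj)) with hq0_def
    set q : Fin n → ℝ := fun k => if k = i ∨ k = j then q0 else pstar k with hq_def
    have hqi : q i = q0 := by simp [hq_def]
    have hqj : q j = q0 := by simp [hq_def]
    have hq_eq : ∀ k, k ≠ i → k ≠ j → q k = pstar k := by
      intro k h1 h2; simp [hq_def, h1, h2]
    have heq0 : Real.exp q0 = (wi + wj) / (vi + vj) := Real.exp_log (by positivity)
    have hei : Real.exp (u i - q0) = wi * (vi + vj) / (wi + wj) := by
      rw [Real.exp_sub, heq0, ← hwi_def, div_div_eq_mul_div]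
    have hej : Real.exp (u j - q0) = wj * (vi + vj) / (wi + wj) := by
      rw [Real.exp_sub, heq0, ← hwj_def, div_div_eq_mul_div]
    have hwji : wj ≤ wi := Real.exp_le_exp.mpr huji
    have hkey1 : wi * vj ≤ vi * wj := by
      rw [hwi_def, hvj_def, hvi_def, hwj_def, ← Real.exp_add, ← Real.exp_add]
      exact Real.exp_le_exp.mpr (by linarith)
    -- bounds on the new values
    have hub_i : wi * (vi + vj) / (wi + wj) ≤ vi := by
      rw [div_le_iff₀ hw]; nlinarith
    have hub_j : wj * (vi + vj) / (wi + wj) ≤ vi := by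
      refine le_trans ?_ hub_i
      gcongr
    have hlb_j : vj ≤ wj * (vi + vj) / (wi + wj) := by
      rw [le_div_iff₀ hw]; nlinarith
    have hlb_i : vj ≤ wi * (vi + vj) / (wi + wj) := by
      refine le_trans hlb_j ?_
      gcongr
    -- validity of the new prices
    have hub : ∀ k ∈ Sstar, ∃ a ∈ Sstar, Real.exp (u k - q k) ≤ Real.exp (u a - pstar a) := by
      intro k hk
      by_cases h1 : k = i
      · subst h1; exact ⟨k, hk, by rw [hqi, hei]; exact hub_i⟩
      by_cases h2 : k = j
      · subst h2; exact ⟨i, hi, by rw [hqj, hej]; exact hub_j⟩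
      · exact ⟨k, hk, by rw [hq_eq k h1 h2]⟩
    have hlb : ∀ k ∈ Sstar, ∃ b ∈ Sstar, Real.exp (u b - pstar b) ≤ Real.exp (u k - q k) := by
      intro k hk
      by_cases h1 : k = i
      · subst h1; exact ⟨j, hj, by rw [hqi, hei]; exact hlb_i⟩
      by_cases h2 : k = j
      · subst h2; exact ⟨k, hk, by rw [hqj, hej]; exact hlb_j⟩
      · exact ⟨k, hk, by rw [hq_eq k h1 h2]⟩
    have h1t : (0:ℝ) < 1 + t := by linarith
    have hvalidq : ∀ j' ∈ Sstar, ∀ i' ∈ Sstar,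
        Real.exp (u i' - q i') ≤ (1 + t) * Real.exp (u j' - q j') := by
      intro j' hj' i' hi'
      obtain ⟨a, ha, hA⟩ := hub i' hi'
      obtain ⟨b, hb, hB⟩ := hlb j' hj'
      calc Real.exp (u i' - q i') ≤ Real.exp (u a - pstar a) := hA
        _ ≤ (1 + t) * Real.exp (u b - pstar b) := hvalid b hb a ha
        _ ≤ (1 + t) * Real.exp (u j' - q j') :=
            mul_le_mul_of_nonneg_left hB (le_of_lt h1t)
    -- splitting sums
    have hsplit : ∀ f : Fin n → ℝ,
        ∑ k ∈ Sstar, f k = f i + (f j + ∑ k ∈ (Sstar.erase i).erase j, f k) := by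
      intro f
      rw [Finset.add_sum_erase _ f (Finset.mem_erase.mpr ⟨Ne.symm hij, hj⟩),
        Finset.add_sum_erase _ f hi]
    have hT : ∀ k ∈ (Sstar.erase i).erase j, q k = pstar k := by
      intro k hk
      exact hq_eq k (Finset.ne_of_mem_erase (Finset.mem_of_mem_erase hk))
        (Finset.ne_of_mem_erase hk)
    have hcc : wi * (vi + vj) / (wi + wj) + wj * (vi + vj) / (wi + wj) = vi + vj := by
      field_simp
    -- Jensen: numerator strictly increases
    have hxney : Real.exp (pstar i) ≠ Real.exp (pstar j) :=
      ne_of_lt (Real.exp_lt_exp.mpr hpij)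
    have hJ := jensen_log_aux (x := Real.exp (pstar i)) (y := Real.exp (pstar j))
      (a := vi / (vi + vj)) (b := vj / (vi + vj)) (Real.exp_pos _) (Real.exp_pos _)
      hxney (by positivity) (by positivity) (by field_simp)
    rw [Real.log_exp, Real.log_exp] at hJ
    have harg : vi / (vi + vj) * Real.exp (pstar i) + vj / (vi + vj) * Real.exp (pstar j)
        = (wi + wj) / (vi + vj) := by
      have h1 : vi * Real.exp (pstar i) = wi := by
        rw [hvi_def, hwi_def, ← Real.exp_add]; ring_nf
      have h2 : vj * Real.exp (pstar j) = wj := by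
        rw [hvj_def, hwj_def, ← Real.exp_add]; ring_nf
      rw [div_mul_eq_mul_div, div_mul_eq_mul_div, h1, h2, ← add_div]
    rw [harg, ← hq0_def] at hJ
    have hjensen : pstar i * vi + pstar j * vj < q0 * (vi + vj) := by
      have hmul := mul_lt_mul_of_pos_right hJ hc
      calc pstar i * vi + pstar j * vj
          = (vi / (vi + vj) * pstar i + vj / (vi + vj) * pstar j) * (vi + vj) := by
            field_simp
        _ < q0 * (vi + vj) := hmul
    have hNum : ∑ k ∈ Sstar, pstar k * Real.exp (u k - pstar k)
        < ∑ k ∈ Sstar, q k * Real.exp (u k - q k) := by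
      rw [hsplit (fun k => pstar k * Real.exp (u k - pstar k)),
        hsplit (fun k => q k * Real.exp (u k - q k))]
      have hrest : ∑ k ∈ (Sstar.erase i).erase j, q k * Real.exp (u k - q k)
          = ∑ k ∈ (Sstar.erase i).erase j, pstar k * Real.exp (u k - pstar k) :=
        Finset.sum_congr rfl (fun k hk => by rw [hT k hk])
      simp only [hrest, hqi, hqj, hei, hej]
      have : q0 * (wi * (vi + vj) / (wi + wj)) + q0 * (wj * (vi + vj) / (wi + wj))
          = q0 * (vi + vj) := by rw [← mul_add, hcc]
      rw [← hvi_def, ← hvj_def]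
      linarith [hjensen]
    have hDen : ∑ k ∈ Sstar, Real.exp (u k - q k)
        = ∑ k ∈ Sstar, Real.exp (u k - pstar k) := by
      rw [hsplit (fun k => Real.exp (u k - q k)),
        hsplit (fun k => Real.exp (u k - pstar k))]
      have hrest : ∑ k ∈ (Sstar.erase i).erase j, Real.exp (u k - q k)
          = ∑ k ∈ (Sstar.erase i).erase j, Real.exp (u k - pstar k) :=
        Finset.sum_congr rfl (fun k hk => by rw [hT k hk])
      simp only [hrest, hqi, hqj, hei, hej]
      rw [← hvi_def, ← hvj_def]
      linarith [hcc]
    have hDpos : 0 < (∑ k ∈ Sstar, Real.exp (u k - pstar k)) + a0 := by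
      have : (0:ℝ) ≤ ∑ k ∈ Sstar, Real.exp (u k - pstar k) :=
        Finset.sum_nonneg fun k _ => le_of_lt (Real.exp_pos _)
      linarith
    have hlt : R Sstar pstar < R Sstar q := by
      simp only [R]
      rw [hDen]
      rw [div_lt_div_iff₀ hDpos hDpos]
      nlinarith [hNum, hDpos]
    have hle := hopt Sstar q hvalidq
    simp only [R] at hlt
    linarith
  constructor
  · intro i hi j hj hij
    by_contra h
    push_neg at h
    exact key i hi j hj (hsort i j hij) h
  · intro i hi j hj huij
    by_contra h
    rcases lt_or_gt_of_ne h with h1 | h1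
    · exact key i hi j hj (le_of_eq huij.symm) h1
    · exact key j hj i hi (le_of_eq huij) h1
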